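/- Let η, H > 0, N ≥ 1, T ≥ 1, losses l_t ∈ [0,H]^N, delays D(t) with t + D(t) ≤ T, and 𝒟_t = {τ : τ + D(τ) ≤ t}. The delayed Hedge algorithm with uniform prior and weights w_t(n) ∝ e^{-η Σ_{τ∈𝒟_{t-1}} l_τ(n)} satisfies, for every expert n: Σ_{t=1}^T ⟨w_t, l_t⟩ - Σ_{t=1}^T l_t(n) ≤ (ln N)/η + η H² T/8 + (η H²/4)·Σ_{t=1}^T D(t). -/

import Mathlib

open Finset

lemma cov_bound {N : ℕ} (q x y : Fin N → ℝ) (H : ℝ) (hH : 0 ≤ H)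
    (hq : ∀ n, 0 ≤ q n) (hq1 : ∑ n, q n = 1)
    (hx : ∀ n, x n ∈ Set.Icc (0:ℝ) H) (hy : ∀ n, y n ∈ Set.Icc (0:ℝ) H) :
    |∑ n, q n * (x n * y n) - (∑ n, q n * x n) * (∑ n, q n * y n)| ≤ H ^ 2 / 4 := by
  set mx := ∑ n, q n * x n with hmx
  set my := ∑ n, q n * y n with hmy
  have hsq : ∀ n, Real.sqrt (q n) * Real.sqrt (q n) = q n := fun n => Real.mul_self_sqrt (hq n)
  have key : ∑ n, q n * (x n * y n) - mx * my
      = ∑ n, (Real.sqrt (q n) * (x n - mx)) * (Real.sqrt (q n) * (y n - my)) := by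
    have h1 : ∀ n, (Real.sqrt (q n) * (x n - mx)) * (Real.sqrt (q n) * (y n - my))
        = q n * (x n * y n) - (q n * x n) * my - mx * (q n * y n) + (mx * my) * q n := by
      intro n
      have h0 : (Real.sqrt (q n) * (x n - mx)) * (Real.sqrt (q n) * (y n - my))
          = (Real.sqrt (q n) * Real.sqrt (q n)) * ((x n - mx) * (y n - my)) := by ring
      rw [h0, hsq n]; ring
    rw [Finset.sum_congr rfl fun n _ => h1 n]
    simp only [Finset.sum_add_distrib, Finset.sum_sub_distrib, ← Finset.sum_mul,
      ← Finset.mul_sum, hq1, mul_one]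
    ring
  have var : ∀ z : Fin N → ℝ, (∀ n, z n ∈ Set.Icc (0:ℝ) H) →
      ∑ n, (Real.sqrt (q n) * (z n - ∑ m, q m * z m)) ^ 2 ≤ H ^ 2 / 4 := by
    intro z hz
    set mz := ∑ m, q m * z m with hmz
    have hmz0 : 0 ≤ mz := Finset.sum_nonneg fun n _ => mul_nonneg (hq n) (hz n).1
    have hmzH : mz ≤ H := by
      calc mz ≤ ∑ n, q n * H := Finset.sum_le_sum fun n _ => mul_le_mul_of_nonneg_left (hz n).2 (hq n)
        _ = H := by rw [← Finset.sum_mul, hq1, one_mul]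
    have h1 : ∀ n, (Real.sqrt (q n) * (z n - mz)) ^ 2
        = q n * (z n)^2 - 2 * mz * (q n * z n) + mz^2 * q n := by
      intro n
      have h0 : (Real.sqrt (q n) * (z n - mz)) ^ 2
          = (Real.sqrt (q n) * Real.sqrt (q n)) * ((z n - mz) ^ 2) := by ring
      rw [h0, hsq n]; ring
    rw [Finset.sum_congr rfl fun n _ => h1 n]
    simp only [Finset.sum_add_distrib, Finset.sum_sub_distrib, ← Finset.sum_mul,
      ← Finset.mul_sum, hq1, mul_one]
    have h2 : ∑ n, q n * (z n)^2 ≤ H * mz := by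
      rw [hmz, Finset.mul_sum]
      refine Finset.sum_le_sum fun n _ => ?_
      have h0 := (hz n).1; have h1 := (hz n).2
      nlinarith [mul_nonneg (hq n) (mul_nonneg h0 (sub_nonneg.2 h1))]
    rw [← hmz]
    nlinarith [sq_nonneg (H - 2 * mz)]
  have cs := Finset.sum_mul_sq_le_sq_mul_sq Finset.univ
    (fun n => Real.sqrt (q n) * (x n - mx)) (fun n => Real.sqrt (q n) * (y n - my))
  have vx := var x hx
  have vy := var y hy
  rw [key, abs_le]
  constructor <;> nlinarith [sq_nonneg (H^2/4),
    Finset.sum_nonneg (fun n (_ : n ∈ Finset.univ) => sq_nonneg (Real.sqrt (q n) * (x n - mx))),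
    Finset.sum_nonneg (fun n (_ : n ∈ Finset.univ) => sq_nonneg (Real.sqrt (q n) * (y n - my)))]

lemma drift_bound {N : ℕ} (hN : 0 < N) (c δ x : Fin N → ℝ) (H : ℝ) (hH : 0 ≤ H)
    (hc : ∀ n, 0 < c n) (hδ : ∀ n, δ n ∈ Set.Icc (0:ℝ) H) (hx : ∀ n, x n ∈ Set.Icc (0:ℝ) H)
    (a b : ℝ) (hab : a ≤ b) :
    |(∑ n, c n * Real.exp (-b * δ n) * x n) / (∑ n, c n * Real.exp (-b * δ n))
     - (∑ n, c n * Real.exp (-a * δ n) * x n) / (∑ n, c n * Real.exp (-a * δ n))|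
      ≤ (b - a) * (H ^ 2 / 4) := by
  haveI : Nonempty (Fin N) := Fin.pos_iff_nonempty.mp hN
  set Z : ℝ → ℝ := fun s => ∑ n, c n * Real.exp (-s * δ n) with hZdef
  set A : ℝ → ℝ := fun s => ∑ n, c n * Real.exp (-s * δ n) * x n with hAdef
  have hZpos : ∀ s, 0 < Z s := fun s =>
    Finset.sum_pos (fun n _ => mul_pos (hc n) (Real.exp_pos _)) Finset.univ_nonempty
  have hZd : ∀ s, HasDerivAt Z (∑ n, c n * (Real.exp (-s * δ n) * (-1 * δ n))) s := by
    intro s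
    apply HasDerivAt.fun_sum
    intro n _
    exact (((hasDerivAt_id s).neg.mul_const (δ n)).exp).const_mul (c n)
  have hAd : ∀ s, HasDerivAt A (∑ n, c n * (Real.exp (-s * δ n) * (-1 * δ n)) * x n) s := by
    intro s
    apply HasDerivAt.fun_sum
    intro n _
    exact ((((hasDerivAt_id s).neg.mul_const (δ n)).exp).const_mul (c n)).mul_const (x n)
  set F : ℝ → ℝ := fun s => A s / Z s with hFdef
  set F' : ℝ → ℝ := fun s =>
    ((∑ n, c n * (Real.exp (-s * δ n) * (-1 * δ n)) * x n) * Z s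
      - A s * (∑ n, c n * (Real.exp (-s * δ n) * (-1 * δ n)))) / Z s ^ 2 with hF'def
  have hFd : ∀ s, HasDerivAt F (F' s) s := fun s => (hAd s).div (hZd s) (hZpos s).ne'
  have hbound : ∀ s, |F' s| ≤ H ^ 2 / 4 := by
    intro s
    have hZ := hZpos s
    set p : Fin N → ℝ := fun n => c n * Real.exp (-s * δ n) / Z s with hpdef
    have hp0 : ∀ n, 0 ≤ p n := fun n =>
      div_nonneg (mul_nonneg (hc n).le (Real.exp_pos _).le) hZ.le
    have hp1 : ∑ n, p n = 1 := by
      rw [hpdef]; rw [← Finset.sum_div]; exact div_self hZ.ne'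
    have hcov := cov_bound p x δ H hH hp0 hp1 hx hδ
    have alg : ∀ SA SB SC Zs : ℝ, Zs ≠ 0 →
        (-SC * Zs - SA * -SB) / Zs ^ 2 = -(SC / Zs - SA / Zs * (SB / Zs)) := by
      intros SA SB SC Zs h; field_simp; ring
    have heq : F' s = -(∑ n, p n * (x n * δ n) - (∑ n, p n * x n) * (∑ n, p n * δ n)) := by
      have e1 : ∑ n, p n * (x n * δ n)
          = (∑ n, c n * Real.exp (-s * δ n) * (x n * δ n)) / Z s := by
        rw [hpdef]; simp only [div_mul_eq_mul_div]; rw [← Finset.sum_div]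
      have e2 : ∑ n, p n * x n = (∑ n, c n * Real.exp (-s * δ n) * x n) / Z s := by
        rw [hpdef]; simp only [div_mul_eq_mul_div]; rw [← Finset.sum_div]
      have e3 : ∑ n, p n * δ n = (∑ n, c n * Real.exp (-s * δ n) * δ n) / Z s := by
        rw [hpdef]; simp only [div_mul_eq_mul_div]; rw [← Finset.sum_div]
      have e4 : (∑ n, c n * (Real.exp (-s * δ n) * (-1 * δ n)) * x n)
          = -(∑ n, c n * Real.exp (-s * δ n) * (x n * δ n)) := by
        rw [← Finset.sum_neg_distrib]; exact Finset.sum_congr rfl fun n _ => by ring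
      have e5 : (∑ n, c n * (Real.exp (-s * δ n) * (-1 * δ n)))
          = -(∑ n, c n * Real.exp (-s * δ n) * δ n) := by
        rw [← Finset.sum_neg_distrib]; exact Finset.sum_congr rfl fun n _ => by ring
      have hA : A s = ∑ n, c n * Real.exp (-s * δ n) * x n := rfl
      simp only [hF'def]
      rw [e1, e2, e3, e4, e5, hA]
      exact alg _ _ _ _ hZ.ne'
    rw [heq, abs_neg]
    exact hcov
  have key := norm_image_sub_le_of_norm_deriv_le_segment'
    (f := F) (f' := F') (C := H ^ 2 / 4) (a := a) (b := b)
    (fun s _ => (hFd s).hasDerivWithinAt)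
    (fun s _ => by rw [Real.norm_eq_abs]; exact hbound s)
    b (Set.right_mem_Icc.2 hab)
  rw [Real.norm_eq_abs] at key
  calc |F b - F a| ≤ H ^ 2 / 4 * (b - a) := key
    _ = (b - a) * (H ^ 2 / 4) := by ring

lemma hoeffding_step {N : ℕ} (hN : 0 < N) (q l : Fin N → ℝ) (H η : ℝ) (hη : 0 ≤ η) (hH : 0 ≤ H)
    (hq : ∀ n, 0 < q n) (hq1 : ∑ n, q n = 1) (hl : ∀ n, l n ∈ Set.Icc (0:ℝ) H) :
    Real.log (∑ n, q n * Real.exp (-η * l n))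
      ≤ -(η * ∑ n, q n * l n) + η ^ 2 * H ^ 2 / 8 := by
  haveI : Nonempty (Fin N) := Fin.pos_iff_nonempty.mp hN
  set m : ℝ := ∑ n, q n * l n with hm
  set Z : ℝ → ℝ := fun s => ∑ n, q n * Real.exp (-s * l n) with hZdef
  have hZpos : ∀ s, 0 < Z s := fun s =>
    Finset.sum_pos (fun n _ => mul_pos (hq n) (Real.exp_pos _)) Finset.univ_nonempty
  have hZd : ∀ s, HasDerivAt Z (∑ n, q n * (Real.exp (-s * l n) * (-1 * l n))) s := by
    intro s
    apply HasDerivAt.fun_sum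
    intro n _
    exact (((hasDerivAt_id s).neg.mul_const (l n)).exp).const_mul (q n)
  set h : ℝ → ℝ := fun s => Real.log (Z s) + s * m - s ^ 2 * (H ^ 2 / 8) with hhdef
  set h' : ℝ → ℝ := fun s =>
    (∑ n, q n * (Real.exp (-s * l n) * (-1 * l n))) / Z s + 1 * m
      - (↑2 * s ^ 1) * (H ^ 2 / 8) with hh'def
  have hhd : ∀ s, HasDerivAt h (h' s) s := by
    intro s
    exact (((hZd s).log (hZpos s).ne').add ((hasDerivAt_id s).mul_const m)).sub
      ((hasDerivAt_pow 2 s).mul_const (H ^ 2 / 8))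
  -- h' s ≤ 0 for 0 ≤ s
  have hF0 : (∑ n, q n * Real.exp (-(0:ℝ) * l n) * l n) / (∑ n, q n * Real.exp (-(0:ℝ) * l n))
      = m := by
    simp [hq1, hm]
  have hder_nonpos : ∀ s, 0 ≤ s → h' s ≤ 0 := by
    intro s hs
    have hdr := drift_bound hN q l l H hH hq hl hl 0 s hs
    rw [hF0, sub_zero] at hdr
    have e5 : (∑ n, q n * (Real.exp (-s * l n) * (-1 * l n)))
        = -(∑ n, q n * Real.exp (-s * l n) * l n) := by
      rw [← Finset.sum_neg_distrib]; exact Finset.sum_congr rfl fun n _ => by ring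
    rw [hh'def]
    simp only []
    rw [e5, neg_div]
    rw [abs_le] at hdr
    have := hdr.1
    have h2 : (2:ℝ) * s ^ 1 * (H ^ 2 / 8) = s * (H ^ 2 / 4) := by ring
    have hZs : Z s = ∑ n, q n * Real.exp (-s * l n) := rfl
    rw [h2, hZs]
    linarith
  have hanti : AntitoneOn h (Set.Icc 0 η) := by
    apply antitoneOn_of_deriv_nonpos (convex_Icc 0 η)
    · exact (Differentiable.continuous fun s => (hhd s).differentiableAt).continuousOn
    · exact fun s _ => ((hhd s).differentiableAt).differentiableWithinAt
    · intro s hs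
      rw [interior_Icc] at hs
      rw [(hhd s).deriv]
      exact hder_nonpos s hs.1.le
  have key := hanti (Set.left_mem_Icc.2 hη) (Set.right_mem_Icc.2 hη) hη
  have hh0 : h 0 = 0 := by
    rw [hhdef]
    simp [hZdef, hq1]
  rw [hh0, hhdef] at key
  simp only [] at key
  have : Z η = ∑ n, q n * Real.exp (-η * l n) := rfl
  rw [this] at key
  nlinarith [key]

lemma single_drift {N : ℕ} (hN : 0 < N) (η H : ℝ) (hη : 0 ≤ η) (hH : 0 ≤ H)
    (L δ x : Fin N → ℝ) (hδ : ∀ n, δ n ∈ Set.Icc (0:ℝ) H) (hx : ∀ n, x n ∈ Set.Icc (0:ℝ) H) :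
    |(∑ n, Real.exp (-η * (L n + δ n)) * x n) / (∑ n, Real.exp (-η * (L n + δ n)))
      - (∑ n, Real.exp (-η * L n) * x n) / (∑ n, Real.exp (-η * L n))| ≤ η * (H ^ 2 / 4) := by
  have h := drift_bound hN (fun n => Real.exp (-η * L n)) δ x H hH
    (fun n => Real.exp_pos _) hδ hx 0 η hη
  simp only [neg_zero, zero_mul, Real.exp_zero, mul_one, sub_zero] at h
  have eb : ∀ n, Real.exp (-η * L n) * Real.exp (-η * δ n)
      = Real.exp (-η * (L n + δ n)) := by
    intro n; rw [← Real.exp_add]; exact congrArg Real.exp (by ring)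
  simp only [eb] at h
  exact h

lemma potential_step {N : ℕ} (hN : 0 < N) (η H : ℝ) (hη : 0 < η) (hH : 0 ≤ H)
    (L δ : Fin N → ℝ) (hδ : ∀ n, δ n ∈ Set.Icc (0:ℝ) H) :
    ∑ n, Real.exp (-η * L n) / (∑ n', Real.exp (-η * L n')) * δ n
      ≤ (Real.log (∑ n, Real.exp (-η * L n))
          - Real.log (∑ n, Real.exp (-η * (L n + δ n)))) / η
        + η * (H ^ 2 / 8) := by
  haveI : Nonempty (Fin N) := Fin.pos_iff_nonempty.mp hN
  set Z : ℝ := ∑ n, Real.exp (-η * L n) with hZdef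
  set Z' : ℝ := ∑ n, Real.exp (-η * (L n + δ n)) with hZ'def
  have hZ : 0 < Z := Finset.sum_pos (fun n _ => Real.exp_pos _) Finset.univ_nonempty
  have hZ' : 0 < Z' := Finset.sum_pos (fun n _ => Real.exp_pos _) Finset.univ_nonempty
  set q : Fin N → ℝ := fun n => Real.exp (-η * L n) / Z with hqdef
  have hq : ∀ n, 0 < q n := fun n => div_pos (Real.exp_pos _) hZ
  have hq1 : ∑ n, q n = 1 := by rw [hqdef, ← Finset.sum_div]; exact div_self hZ.ne'
  have hh := hoeffding_step hN q δ H η hη.le hH hq hq1 hδ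
  have e : ∑ n, q n * Real.exp (-η * δ n) = Z' / Z := by
    rw [hqdef]
    simp only [div_mul_eq_mul_div]
    rw [← Finset.sum_div, hZ'def]
    congr 1
    refine Finset.sum_congr rfl fun n _ => ?_
    rw [← Real.exp_add]; exact congrArg Real.exp (by ring)
  rw [e, Real.log_div hZ'.ne' hZ.ne'] at hh
  have hm : ∑ n, Real.exp (-η * L n) / (∑ n', Real.exp (-η * L n')) * δ n
      = ∑ n, q n * δ n := by
    refine Finset.sum_congr rfl fun n _ => ?_
    rw [hqdef]
  rw [hm]
  have h2 : (∑ n, q n * δ n) ≤ ((Real.log Z - Real.log Z') + η ^ 2 * H ^ 2 / 8) / η := by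
    rw [le_div_iff₀ hη]
    nlinarith [hh]
  have h3 : ((Real.log Z - Real.log Z') + η ^ 2 * H ^ 2 / 8) / η
      = (Real.log Z - Real.log Z') / η + η * (H ^ 2 / 8) := by
    field_simp
  rw [h3] at h2
  exact h2

lemma weight_sum_eq {N : ℕ} (η : ℝ) (M : Fin N → ℝ) (x : Fin N → ℝ) :
    ∑ n, Real.exp (-η * M n) / (∑ n', Real.exp (-η * M n')) * x n
      = (∑ n, Real.exp (-η * M n) * x n) / (∑ n', Real.exp (-η * M n')) := by
  simp only [div_mul_eq_mul_div]
  rw [← Finset.sum_div]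

lemma finset_drift {N : ℕ} (hN : 0 < N) (η H : ℝ) (hη : 0 ≤ η) (hH : 0 ≤ H)
    (l : ℕ → Fin N → ℝ) (x : Fin N → ℝ) (hx : ∀ n, x n ∈ Set.Icc (0:ℝ) H)
    (S : Finset ℕ) (E : Finset ℕ) :
    Disjoint S E → (∀ τ ∈ E, ∀ n, l τ n ∈ Set.Icc (0:ℝ) H) →
    (∑ n, Real.exp (-η * ∑ τ ∈ S, l τ n)
        / (∑ n', Real.exp (-η * ∑ τ ∈ S, l τ n')) * x n)
      ≤ (∑ n, Real.exp (-η * ∑ τ ∈ S ∪ E, l τ n)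
        / (∑ n', Real.exp (-η * ∑ τ ∈ S ∪ E, l τ n')) * x n)
        + (E.card : ℝ) * (η * (H ^ 2 / 4)) := by
  induction E using Finset.induction_on with
  | empty => intro _ _; simp
  | @insert a E ha ih =>
    intro hdisj hbound
    have hdisjE : Disjoint S E := hdisj.mono_right (Finset.subset_insert a E)
    have haS : a ∉ S := fun h => (Finset.disjoint_left.mp hdisj h) (Finset.mem_insert_self a E)
    have ihh := ih hdisjE (fun τ hτ => hbound τ (Finset.mem_insert_of_mem hτ))
    have haSE : a ∉ S ∪ E := by
      simp only [Finset.mem_union]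
      rintro (h | h)
      · exact haS h
      · exact ha h
    have hsum : ∀ n, (∑ τ ∈ insert a (S ∪ E), l τ n)
        = (∑ τ ∈ S ∪ E, l τ n) + l a n := by
      intro n; rw [Finset.sum_insert haSE]; ring
    have hstep := single_drift hN η H hη hH (fun n => ∑ τ ∈ S ∪ E, l τ n) (l a) x
      (fun n => hbound a (Finset.mem_insert_self a E) n) hx
    rw [weight_sum_eq η, weight_sum_eq η]
    rw [weight_sum_eq η, weight_sum_eq η] at ihh
    have habs := (abs_le.mp hstep).1
    have hrw : ∀ n, Real.exp (-η * ∑ τ ∈ S ∪ insert a E, l τ n)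
        = Real.exp (-η * ((∑ τ ∈ S ∪ E, l τ n) + l a n)) := by
      intro n; rw [Finset.union_insert, hsum n]
    simp only [hrw]
    have hcard : ((insert a E).card : ℝ) = (E.card : ℝ) + 1 := by
      rw [Finset.card_insert_of_notMem ha]; push_cast; ring
    rw [hcard, add_mul, one_mul]
    linarith [habs, ihh]

lemma telescope (φ : ℕ → ℝ) (T : ℕ) :
    ∑ t ∈ Finset.Icc 1 T, (φ (t - 1) - φ t) = φ 0 - φ T := by
  induction T with
  | zero => simp
  | succ T ih =>
    rw [Finset.sum_Icc_succ_top (by omega : 1 ≤ T + 1), ih]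
    simp

lemma counting (T : ℕ) (D : ℕ → ℕ) :
    ∑ t ∈ Finset.Icc 1 T,
        ((Finset.Icc 1 T).filter (fun τ => τ ≤ t - 1 ∧ t - 1 < τ + D τ)).card
      ≤ ∑ τ ∈ Finset.Icc 1 T, D τ := by
  have h1 : ∀ t, ((Finset.Icc 1 T).filter (fun τ => τ ≤ t - 1 ∧ t - 1 < τ + D τ)).card
      = ∑ τ ∈ Finset.Icc 1 T, if τ ≤ t - 1 ∧ t - 1 < τ + D τ then 1 else 0 := fun t =>
    Finset.card_filter _ _
  rw [Finset.sum_congr rfl fun t _ => h1 t, Finset.sum_comm]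
  refine Finset.sum_le_sum fun τ hτ => ?_
  have h2 : ∑ t ∈ Finset.Icc 1 T, (if τ ≤ t - 1 ∧ t - 1 < τ + D τ then 1 else 0)
      = ((Finset.Icc 1 T).filter (fun t => τ ≤ t - 1 ∧ t - 1 < τ + D τ)).card :=
    (Finset.card_filter _ _).symm
  rw [h2]
  calc ((Finset.Icc 1 T).filter (fun t => τ ≤ t - 1 ∧ t - 1 < τ + D τ)).card
      ≤ (Finset.Icc (τ + 1) (τ + D τ)).card := by
        apply Finset.card_le_card
        intro t ht
        simp only [Finset.mem_filter, Finset.mem_Icc] at ht ⊢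
        omega
    _ = D τ := by rw [Nat.card_Icc]; omega

/-- Regret bound for delayed Hedge with uniform prior: for every expert `n`,
`Σ_t ⟨w_t, l_t⟩ - Σ_t l_t(n) ≤ (ln N)/η + η H² T/8 + (η H²/4) Σ_t D t`. -/
theorem stmt_14 (N T : ℕ) (hN : 1 ≤ N) (hT : 1 ≤ T) (η H : ℝ)
    (hη : 0 < η) (hH : 0 < H) (l : ℕ → Fin N → ℝ)
    (hl : ∀ t ∈ Finset.Icc 1 T, ∀ n, l t n ∈ Set.Icc (0 : ℝ) H)
    (D : ℕ → ℕ) (hD : ∀ t ∈ Finset.Icc 1 T, t + D t ≤ T)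
    (𝒟 : ℕ → Finset ℕ)
    (h𝒟 : ∀ t, 𝒟 t = (Finset.Icc 1 T).filter (fun τ => τ + D τ ≤ t))
    (w : ℕ → Fin N → ℝ)
    (hw : ∀ t n, w t n =
      Real.exp (-η * ∑ τ ∈ 𝒟 (t - 1), l τ n) /
        ∑ n', Real.exp (-η * ∑ τ ∈ 𝒟 (t - 1), l τ n')) :
    ∀ n, (∑ t ∈ Finset.Icc 1 T, ∑ n', w t n' * l t n')
        - ∑ t ∈ Finset.Icc 1 T, l t n
      ≤ Real.log N / η + η * H ^ 2 * T / 8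
        + η * H ^ 2 / 4 * ∑ t ∈ Finset.Icc 1 T, (D t : ℝ) := by
  intro n
  have hN0 : 0 < N := hN
  have hη' : 0 ≤ η := hη.le
  have hH' : 0 ≤ H := hH.le
  set φ : ℕ → ℝ :=
    fun t => Real.log (∑ n', Real.exp (-η * ∑ τ ∈ Finset.Icc 1 t, l τ n')) with hφ
  have step : ∀ t ∈ Finset.Icc 1 T, ∑ n', w t n' * l t n'
      ≤ (φ (t - 1) - φ t) / η + η * (H ^ 2 / 8)
        + (((Finset.Icc 1 (t - 1) \ 𝒟 (t - 1)).card : ℝ)) * (η * (H ^ 2 / 4)) := by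
    intro t ht
    rw [Finset.mem_Icc] at ht
    have hlt : ∀ n', l t n' ∈ Set.Icc (0 : ℝ) H := hl t (Finset.mem_Icc.2 ht)
    have hw' : ∀ n', w t n' * l t n'
        = Real.exp (-η * ∑ τ ∈ 𝒟 (t - 1), l τ n')
          / (∑ n'', Real.exp (-η * ∑ τ ∈ 𝒟 (t - 1), l τ n'')) * l t n' := fun n' => by
      rw [hw]
    rw [Finset.sum_congr rfl fun n' _ => hw' n']
    have hsub : 𝒟 (t - 1) ⊆ Finset.Icc 1 (t - 1) := by
      intro τ hτ
      rw [h𝒟] at hτ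
      simp only [Finset.mem_filter, Finset.mem_Icc] at hτ ⊢
      omega
    have hunion : 𝒟 (t - 1) ∪ (Finset.Icc 1 (t - 1) \ 𝒟 (t - 1)) = Finset.Icc 1 (t - 1) :=
      Finset.union_sdiff_of_subset hsub
    have hdisj : Disjoint (𝒟 (t - 1)) (Finset.Icc 1 (t - 1) \ 𝒟 (t - 1)) :=
      Finset.disjoint_sdiff
    have hEb : ∀ τ ∈ Finset.Icc 1 (t - 1) \ 𝒟 (t - 1), ∀ n', l τ n' ∈ Set.Icc (0 : ℝ) H := by
      intro τ hτ
      apply hl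
      rw [Finset.mem_sdiff, Finset.mem_Icc] at hτ
      rw [Finset.mem_Icc]
      omega
    have hdrift := finset_drift hN0 η H hη' hH' l (l t) hlt (𝒟 (t - 1)) _ hdisj hEb
    rw [hunion] at hdrift
    have hpot := potential_step hN0 η H hη hH'
      (fun n' => ∑ τ ∈ Finset.Icc 1 (t - 1), l τ n') (l t) hlt
    simp only [] at hpot
    have hins : Finset.Icc 1 t = insert t (Finset.Icc 1 (t - 1)) := by
      ext τ
      simp only [Finset.mem_insert, Finset.mem_Icc]
      omega
    have htni : t ∉ Finset.Icc 1 (t - 1) := by rw [Finset.mem_Icc]; omega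
    have hLt : ∀ n', ∑ τ ∈ Finset.Icc 1 t, l τ n'
        = (∑ τ ∈ Finset.Icc 1 (t - 1), l τ n') + l t n' := by
      intro n'
      rw [hins, Finset.sum_insert htni]
      ring
    have hφ1 : φ (t - 1)
        = Real.log (∑ n', Real.exp (-η * ∑ τ ∈ Finset.Icc 1 (t - 1), l τ n')) := rfl
    have hφ2 : φ t = Real.log (∑ n',
        Real.exp (-η * ((∑ τ ∈ Finset.Icc 1 (t - 1), l τ n') + l t n'))) := by
      rw [hφ]
      simp only []
      congr 1
      exact Finset.sum_congr rfl fun n' _ => by rw [hLt n']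
    rw [hφ1, hφ2]
    calc ∑ n', Real.exp (-η * ∑ τ ∈ 𝒟 (t - 1), l τ n')
          / (∑ n'', Real.exp (-η * ∑ τ ∈ 𝒟 (t - 1), l τ n'')) * l t n'
        ≤ (∑ n', Real.exp (-η * ∑ τ ∈ Finset.Icc 1 (t - 1), l τ n')
            / (∑ n'', Real.exp (-η * ∑ τ ∈ Finset.Icc 1 (t - 1), l τ n'')) * l t n')
          + ((Finset.Icc 1 (t - 1) \ 𝒟 (t - 1)).card : ℝ) * (η * (H ^ 2 / 4)) := hdrift
      _ ≤ ((Real.log (∑ n', Real.exp (-η * ∑ τ ∈ Finset.Icc 1 (t - 1), l τ n'))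
            - Real.log (∑ n', Real.exp (-η * ((∑ τ ∈ Finset.Icc 1 (t - 1), l τ n') + l t n')))) / η
            + η * (H ^ 2 / 8))
          + ((Finset.Icc 1 (t - 1) \ 𝒟 (t - 1)).card : ℝ) * (η * (H ^ 2 / 4)) := by
          exact add_le_add hpot le_rfl
      _ = _ := by ring
  have hsum := Finset.sum_le_sum step
  -- split the RHS sum
  rw [Finset.sum_add_distrib, Finset.sum_add_distrib, ← Finset.sum_div, telescope φ T,
    Finset.sum_const, Nat.card_Icc] at hsum
  -- φ 0 = log N
  have hIcc0 : Finset.Icc 1 0 = (∅ : Finset ℕ) := by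
    apply Finset.Icc_eq_empty
    omega
  have hφ0 : φ 0 = Real.log N := by
    rw [hφ]
    simp [hIcc0]
  -- φ T lower bound
  have hφT : -(η * ∑ t ∈ Finset.Icc 1 T, l t n) ≤ φ T := by
    have h1 : Real.exp (-η * ∑ τ ∈ Finset.Icc 1 T, l τ n)
        ≤ ∑ n', Real.exp (-η * ∑ τ ∈ Finset.Icc 1 T, l τ n') :=
      Finset.single_le_sum (f := fun n' => Real.exp (-η * ∑ τ ∈ Finset.Icc 1 T, l τ n'))
        (fun i _ => (Real.exp_pos _).le) (Finset.mem_univ n)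
    have h2 := Real.log_le_log (Real.exp_pos _) h1
    rw [Real.log_exp] at h2
    calc -(η * ∑ t ∈ Finset.Icc 1 T, l t n)
        = -η * ∑ τ ∈ Finset.Icc 1 T, l τ n := by ring
      _ ≤ φ T := h2
  have hB : (φ 0 - φ T) / η ≤ Real.log N / η + ∑ t ∈ Finset.Icc 1 T, l t n := by
    have h1 : φ 0 - φ T ≤ Real.log N + η * ∑ t ∈ Finset.Icc 1 T, l t n := by
      rw [hφ0]
      linarith [hφT]
    have h2 : (φ 0 - φ T) / η ≤ (Real.log N + η * ∑ t ∈ Finset.Icc 1 T, l t n) / η := by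
      gcongr
    have h3 : (Real.log N + η * ∑ t ∈ Finset.Icc 1 T, l t n) / η
        = Real.log N / η + ∑ t ∈ Finset.Icc 1 T, l t n := by
      rw [add_div, mul_div_cancel_left₀ _ hη.ne']
    linarith [h2, h3.le, h3.ge]
  have hfilter : ∀ t ∈ Finset.Icc 1 T, Finset.Icc 1 (t - 1) \ 𝒟 (t - 1)
      = (Finset.Icc 1 T).filter (fun τ => τ ≤ t - 1 ∧ t - 1 < τ + D τ) := by
    intro t ht
    rw [Finset.mem_Icc] at ht
    ext τ
    rw [h𝒟]
    simp only [Finset.mem_sdiff, Finset.mem_Icc, Finset.mem_filter, not_and, not_le]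
    omega
  have hC : ∑ t ∈ Finset.Icc 1 T, ((Finset.Icc 1 (t - 1) \ 𝒟 (t - 1)).card : ℝ)
      ≤ ∑ t ∈ Finset.Icc 1 T, (D t : ℝ) := by
    rw [Finset.sum_congr rfl fun t ht => by rw [hfilter t ht]]
    exact_mod_cast counting T D
  rw [Nat.add_sub_cancel, nsmul_eq_mul, ← Finset.sum_mul] at hsum
  have hC' : (∑ t ∈ Finset.Icc 1 T, ((Finset.Icc 1 (t - 1) \ 𝒟 (t - 1)).card : ℝ))
        * (η * (H ^ 2 / 4))
      ≤ (∑ t ∈ Finset.Icc 1 T, (D t : ℝ)) * (η * (H ^ 2 / 4)) := by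
    apply mul_le_mul_of_nonneg_right hC
    positivity
  linarith [hsum, hB, hC']
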